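/- Let (Ω, P) be a probability space and {A_n} a sequence of events with ∑_{n=1}^∞ P(A_n) = ∞. Then P(limsup A_n) ≥ limsup_{n→∞} (∑_{k=1}^n P(A_k))² / (∑_{i=1}^n ∑_{j=1}^n P(A_i ∩ A_j)). -/

import Mathlib

open MeasureTheory Filter Set Topology

lemma cs_sq {Ω : Type*} [MeasurableSpace Ω] (μ : Measure Ω) (f g : Ω → ENNReal)
    (hf : Measurable f) (hg : Measurable g) :
    (∫⁻ ω, f ω * g ω ∂μ) ^ 2 ≤ (∫⁻ ω, f ω ^ 2 ∂μ) * (∫⁻ ω, g ω ^ 2 ∂μ) := by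
  have h := ENNReal.lintegral_mul_le_Lp_mul_Lq μ (Real.holderConjugate_iff_eq_conjExponent (by norm_num) |>.mpr (by norm_num) : Real.HolderConjugate 2 2) hf.aemeasurable hg.aemeasurable
  have h2 : ∀ x : Ω → ENNReal, (∫⁻ ω, x ω ^ (2:ℝ) ∂μ) = ∫⁻ ω, x ω ^ 2 ∂μ := by
    intro x; congr 1; ext ω; rw [← ENNReal.rpow_natCast (x ω) 2]; norm_num
  calc (∫⁻ ω, f ω * g ω ∂μ) ^ 2
      ≤ ((∫⁻ ω, f ω ^ (2:ℝ) ∂μ) ^ (1/(2:ℝ)) * (∫⁻ ω, g ω ^ (2:ℝ) ∂μ) ^ (1/(2:ℝ))) ^ 2 := by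
        exact pow_le_pow_left' h 2
    _ = (∫⁻ ω, f ω ^ 2 ∂μ) * (∫⁻ ω, g ω ^ 2 ∂μ) := by
        rw [mul_pow, ← ENNReal.rpow_natCast _ 2, ← ENNReal.rpow_natCast _ 2,
          ← ENNReal.rpow_mul, ← ENNReal.rpow_mul, h2, h2]
        norm_num

lemma key_ennreal {Ω : Type*} [MeasurableSpace Ω] (μ : Measure Ω) [IsProbabilityMeasure μ]
    (A : ℕ → Set Ω) (hA : ∀ n, MeasurableSet (A n)) (s : Finset ℕ) :
    (∑ k ∈ s, μ (A k)) ^ 2 ≤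
      (∑ i ∈ s, ∑ j ∈ s, μ (A i ∩ A j)) * μ (⋃ k ∈ s, A k) := by
  set T : Ω → ENNReal := fun ω => ∑ k ∈ s, (A k).indicator 1 ω with hT
  have hTmeas : Measurable T := by
    apply Finset.measurable_sum
    intro k _; exact (measurable_one.indicator (hA k))
  have hUmeas : MeasurableSet (⋃ k ∈ s, A k) := MeasurableSet.biUnion s.countable_toSet (fun k _ => hA k)
  have hInd : Measurable ((⋃ k ∈ s, A k).indicator (1 : Ω → ENNReal)) :=
    measurable_one.indicator hUmeas
  have hTU : ∀ ω, T ω = T ω * (⋃ k ∈ s, A k).indicator 1 ω := by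
    intro ω
    by_cases h : ω ∈ ⋃ k ∈ s, A k
    · rw [Set.indicator_of_mem h]; simp
    · rw [Set.indicator_of_notMem h, mul_zero]
      simp only [hT]
      apply Finset.sum_eq_zero
      intro k hk
      apply Set.indicator_of_notMem
      exact fun hmem => h (Set.mem_biUnion hk hmem)
  have hint1 : ∫⁻ ω, T ω ∂μ = ∑ k ∈ s, μ (A k) := by
    rw [hT, lintegral_finset_sum _ (fun k _ => measurable_one.indicator (hA k))]
    congr 1; ext k
    exact lintegral_indicator_one (hA k)
  have hint2 : ∫⁻ ω, T ω ^ 2 ∂μ = ∑ i ∈ s, ∑ j ∈ s, μ (A i ∩ A j) := by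
    have : ∀ ω, T ω ^ 2 = ∑ i ∈ s, ∑ j ∈ s, (A i ∩ A j).indicator 1 ω := by
      intro ω
      rw [sq, hT, Finset.sum_mul_sum]
      congr 1; ext i; congr 1; ext j
      rw [← Set.inter_indicator_mul]
      simp [Set.indicator]
    simp_rw [this]
    rw [lintegral_finset_sum _ (fun i _ => Finset.measurable_sum _
      (fun j _ => measurable_one.indicator ((hA i).inter (hA j))))]
    congr 1; ext i
    rw [lintegral_finset_sum _ (fun j _ => measurable_one.indicator ((hA i).inter (hA j)))]
    congr 1; ext j
    exact lintegral_indicator_one ((hA i).inter (hA j))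
  have hintU : ∫⁻ ω, ((⋃ k ∈ s, A k).indicator (1:Ω→ENNReal) ω) ^ 2 ∂μ = μ (⋃ k ∈ s, A k) := by
    have : ∀ ω, ((⋃ k ∈ s, A k).indicator (1:Ω→ENNReal) ω) ^ 2 = (⋃ k ∈ s, A k).indicator 1 ω := by
      intro ω; by_cases h : ω ∈ ⋃ k ∈ s, A k <;> simp [Set.indicator, h]
    simp_rw [this]
    exact lintegral_indicator_one hUmeas
  calc (∑ k ∈ s, μ (A k)) ^ 2 = (∫⁻ ω, T ω ∂μ) ^ 2 := by rw [hint1]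
    _ = (∫⁻ ω, T ω * (⋃ k ∈ s, A k).indicator 1 ω ∂μ) ^ 2 := by
        congr 1; exact lintegral_congr hTU
    _ ≤ (∫⁻ ω, T ω ^ 2 ∂μ) * (∫⁻ ω, ((⋃ k ∈ s, A k).indicator (1:Ω→ENNReal) ω) ^ 2 ∂μ) :=
        cs_sq μ T _ hTmeas hInd
    _ = (∑ i ∈ s, ∑ j ∈ s, μ (A i ∩ A j)) * μ (⋃ k ∈ s, A k) := by rw [hint2, hintU]

lemma key_real {Ω : Type*} [MeasurableSpace Ω] (μ : Measure Ω) [IsProbabilityMeasure μ]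
    (A : ℕ → Set Ω) (hA : ∀ n, MeasurableSet (A n)) (s : Finset ℕ) :
    (∑ k ∈ s, (μ (A k)).toReal) ^ 2 ≤
      (∑ i ∈ s, ∑ j ∈ s, (μ (A i ∩ A j)).toReal) * (μ (⋃ k ∈ s, A k)).toReal := by
  have h := key_ennreal μ A hA s
  have h1 : (∑ k ∈ s, (μ (A k)).toReal) = ((∑ k ∈ s, μ (A k))).toReal := by
    rw [ENNReal.toReal_sum (fun k _ => measure_ne_top μ _)]
  have h2 : (∑ i ∈ s, ∑ j ∈ s, (μ (A i ∩ A j)).toReal)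
      = (∑ i ∈ s, ∑ j ∈ s, μ (A i ∩ A j)).toReal := by
    rw [ENNReal.toReal_sum (fun i _ => _root_.ne_of_lt (ENNReal.sum_lt_top.mpr
      (fun j _ => measure_lt_top μ _)))]
    congr 1; ext i
    rw [ENNReal.toReal_sum (fun j _ => measure_ne_top μ _)]
  rw [h1, h2, ← ENNReal.toReal_pow, ← ENNReal.toReal_mul]
  apply ENNReal.toReal_mono _ h
  exact ENNReal.mul_ne_top (_root_.ne_of_lt (ENNReal.sum_lt_top.mpr
    (fun i _ => ENNReal.sum_lt_top.mpr (fun j _ => measure_lt_top μ _)))) (measure_ne_top μ _)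

lemma ratio_le {Ω : Type*} [MeasurableSpace Ω] (μ : Measure Ω) [IsProbabilityMeasure μ]
    (A : ℕ → Set Ω) (hA : ∀ n, MeasurableSet (A n)) (s : Finset ℕ) {V : Set Ω}
    (hV : (⋃ k ∈ s, A k) ⊆ V) :
    (∑ k ∈ s, (μ (A k)).toReal) ^ 2 /
      (∑ i ∈ s, ∑ j ∈ s, (μ (A i ∩ A j)).toReal) ≤ (μ V).toReal := by
  set D := ∑ i ∈ s, ∑ j ∈ s, (μ (A i ∩ A j)).toReal with hD
  have hDnn : 0 ≤ D := Finset.sum_nonneg fun i _ => Finset.sum_nonneg fun j _ =>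
    ENNReal.toReal_nonneg
  rcases eq_or_lt_of_le hDnn with h0 | hpos
  · rw [← h0, div_zero]; exact ENNReal.toReal_nonneg
  · rw [div_le_iff₀ hpos]
    calc (∑ k ∈ s, (μ (A k)).toReal) ^ 2
        ≤ D * (μ (⋃ k ∈ s, A k)).toReal := key_real μ A hA s
      _ ≤ (μ V).toReal * D := by
          rw [mul_comm]
          exact mul_le_mul_of_nonneg_right
            (ENNReal.toReal_mono (measure_ne_top μ _) (measure_mono hV)) hDnn

theorem erdos_renyi_bound {Ω : Type*} [MeasurableSpace Ω] (μ : Measure Ω)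
    [IsProbabilityMeasure μ] (A : ℕ → Set Ω) (hA : ∀ n, MeasurableSet (A n))
    (hdiv : Tendsto (fun n => ∑ k ∈ Finset.range n, (μ (A k)).toReal) atTop atTop) :
    (μ (Filter.limsup A atTop)).toReal ≥
      Filter.limsup (fun n =>
        (∑ k ∈ Finset.range n, (μ (A k)).toReal) ^ 2 /
          (∑ i ∈ Finset.range n, ∑ j ∈ Finset.range n, (μ (A i ∩ A j)).toReal)) atTop := by
  set f : ℕ → ℝ := fun k => (μ (A k)).toReal with hf
  set S : ℕ → ℝ := fun n => ∑ k ∈ Finset.range n, f k with hS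
  set b : ℕ → ℝ := fun n => S n ^ 2 /
    (∑ i ∈ Finset.range n, ∑ j ∈ Finset.range n, (μ (A i ∩ A j)).toReal) with hb
  set L : ℝ := Filter.limsup b atTop with hL
  have hb0 : ∀ n, 0 ≤ b n := fun n => div_nonneg (sq_nonneg _)
    (Finset.sum_nonneg fun i _ => Finset.sum_nonneg fun j _ => ENNReal.toReal_nonneg)
  have hb1 : ∀ n, b n ≤ 1 := by
    intro n
    calc b n ≤ (μ (⋃ k ∈ Finset.range n, A k)).toReal :=
          ratio_le μ A hA (Finset.range n) subset_rfl
      _ ≤ 1 := by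
          rw [show (1:ℝ) = (1:ENNReal).toReal by simp]
          exact ENNReal.toReal_mono ENNReal.one_ne_top prob_le_one
  set C : ℕ → Set Ω := fun m => ⋃ k, ⋃ (_ : m ≤ k), A k with hC
  have hCmeas : ∀ m, MeasurableSet (C m) :=
    fun m => MeasurableSet.iUnion fun k => MeasurableSet.iUnion fun _ => hA k
  have hCanti : Antitone C := by
    intro m m' hmm'
    apply Set.iUnion_mono
    intro k
    exact Set.iUnion_subset fun h => Set.subset_iUnion_of_subset (hmm'.trans h) subset_rfl
  have hlimsupA : Filter.limsup A atTop = ⋂ m, C m := by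
    rw [limsup_eq_iInf_iSup_of_nat]
    simp only [hC, Set.iInf_eq_iInter, Set.iSup_eq_iUnion]
  -- the main estimate for each m
  have hmain : ∀ m, L ≤ (μ (C m)).toReal := by
    intro m
    apply le_of_forall_pos_le_add
    intro ε hε
    -- frequently b n > L - ε/2
    have hbdd : IsBoundedUnder (· ≥ ·) atTop b := isBoundedUnder_of ⟨0, fun n => hb0 n⟩
    have hcob : IsCoboundedUnder (· ≤ ·) atTop b := hbdd.isCoboundedUnder_le
    have hfreq : ∃ᶠ n in atTop, L - ε/2 < b n :=
      frequently_lt_of_lt_limsup hcob (by linarith)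
    -- eventually (S n - S m)/S n squared is ≥ 1 - ε/2
    set δ : ℝ := min (ε/4) 1 with hδ
    have hδpos : 0 < δ := lt_min (by linarith) one_pos
    have hδ1 : δ ≤ 1 := min_le_right _ _
    have hSm0 : 0 ≤ S m := Finset.sum_nonneg fun k _ => ENNReal.toReal_nonneg
    have hev : ∀ᶠ n in atTop, S m / δ + 1 ≤ S n := hdiv.eventually_ge_atTop _
    obtain ⟨n, hbn, hSn, hmn⟩ := (hfreq.and_eventually (hev.and (eventually_ge_atTop m))).exists
    have hSnpos : 0 < S n := lt_of_lt_of_le (by positivity) hSn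
    have hratio : S m / S n ≤ δ := by
      rw [div_le_iff₀ hSnpos]
      have h' : S m / δ ≤ S n - 1 := by linarith
      have h'' : S m / δ * δ ≤ (S n - 1) * δ := mul_le_mul_of_nonneg_right h' hδpos.le
      rw [div_mul_cancel₀ _ (ne_of_gt hδpos)] at h''
      nlinarith
    have ha : 1 - ε/2 ≤ ((S n - S m) / S n) ^ 2 := by
      have h1 : (S n - S m) / S n = 1 - S m / S n := by field_simp
      have h2 : 0 ≤ 1 - S m / S n := by linarith
      rw [h1]
      nlinarith [hδpos.le, min_le_left (ε/4) (1:ℝ)]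
    -- ratio over Ico m n
    set S' : ℝ := ∑ k ∈ Finset.Ico m n, f k with hS'
    have hS'eq : S' = S n - S m := by
      rw [hS', Finset.sum_Ico_eq_sub f hmn]
    set D' : ℝ := ∑ i ∈ Finset.Ico m n, ∑ j ∈ Finset.Ico m n, (μ (A i ∩ A j)).toReal with hD'
    set D : ℝ := ∑ i ∈ Finset.range n, ∑ j ∈ Finset.range n, (μ (A i ∩ A j)).toReal with hDD
    have hsub : (⋃ k ∈ Finset.Ico m n, A k) ⊆ C m := by
      apply Set.iUnion₂_subset
      intro k hk
      exact Set.subset_iUnion₂ (s := fun k (_ : m ≤ k) => A k) k (Finset.mem_Ico.mp hk).1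
    have hmu : S' ^ 2 / D' ≤ (μ (C m)).toReal := ratio_le μ A hA (Finset.Ico m n) hsub
    have hDnn' : 0 ≤ D' := Finset.sum_nonneg fun i _ => Finset.sum_nonneg fun j _ =>
      ENNReal.toReal_nonneg
    have hDmono : D' ≤ D := by
      have step1 : D' ≤ ∑ i ∈ Finset.Ico m n, ∑ j ∈ Finset.range n, (μ (A i ∩ A j)).toReal :=
        Finset.sum_le_sum fun i _ => Finset.sum_le_sum_of_subset_of_nonneg
          (by intro x hx; rw [Finset.mem_range]; exact (Finset.mem_Ico.mp hx).2 : Finset.Ico m n ⊆ Finset.range n) (fun j _ _ => ENNReal.toReal_nonneg)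
      exact step1.trans (Finset.sum_le_sum_of_subset_of_nonneg (by intro x hx; rw [Finset.mem_range]; exact (Finset.mem_Ico.mp hx).2 : Finset.Ico m n ⊆ Finset.range n)
        (fun i _ _ => Finset.sum_nonneg fun j _ => ENNReal.toReal_nonneg))
    have hab : (1 - ε/2) * b n ≤ S' ^ 2 / D' := by
      rcases eq_or_lt_of_le (sub_nonneg.mpr (show S m ≤ S n by
        apply Finset.sum_le_sum_of_subset_of_nonneg (Finset.range_subset_range.mpr hmn)
        intro k _ _; exact ENNReal.toReal_nonneg)) with heq | hpos
      · -- S n = S m : then 1 - ε/2 ≤ 0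
        have h0 : ((S n - S m) / S n) ^ 2 = 0 := by rw [← heq]; simp
        have : 1 - ε/2 ≤ 0 := by rw [h0] at ha; linarith
        have := mul_nonpos_of_nonpos_of_nonneg this (hb0 n)
        exact this.trans (div_nonneg (sq_nonneg _) hDnn')
      · -- S n - S m > 0
        have hdiag : S' ≤ D' := by
          apply Finset.sum_le_sum
          intro i hi
          have hfi : f i = (μ (A i ∩ A i)).toReal := by rw [Set.inter_self]
          rw [hfi]
          exact Finset.single_le_sum (f := fun j => (μ (A i ∩ A j)).toReal)
            (fun j _ => ENNReal.toReal_nonneg) hi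
        have hD'pos : 0 < D' := lt_of_lt_of_le (hS'eq ▸ hpos) hdiag
        have hDpos : 0 < D := lt_of_lt_of_le hD'pos hDmono
        have h1 : S' ^ 2 / D ≤ S' ^ 2 / D' :=
          div_le_div_of_nonneg_left (sq_nonneg _) hD'pos hDmono
        have h2 : ((S n - S m) / S n) ^ 2 * b n = S' ^ 2 / D := by
          have hbn : b n = S n ^ 2 / D := rfl
          rw [hbn, hS'eq, div_pow, div_mul_div_comm]
          rw [div_eq_div_iff (by positivity) (by positivity)]
          ring
        have h3 : (1 - ε/2) * b n ≤ ((S n - S m) / S n) ^ 2 * b n :=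
          mul_le_mul_of_nonneg_right ha (hb0 n)
        calc (1 - ε/2) * b n ≤ ((S n - S m) / S n) ^ 2 * b n := h3
          _ = S' ^ 2 / D := h2
          _ ≤ S' ^ 2 / D' := h1
    have hbne : b n ≤ 1 := hb1 n
    have hbnn : 0 ≤ b n := hb0 n
    nlinarith [hmu, hab, hbn]
  -- conclude
  have htend : Tendsto (fun m => (μ (C m)).toReal) atTop (𝓝 ((μ (⋂ m, C m)).toReal)) := by
    have h := tendsto_measure_iInter_atTop (fun m => (hCmeas m).nullMeasurableSet) hCanti
      ⟨0, measure_ne_top μ _⟩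
    exact (ENNReal.tendsto_toReal (measure_ne_top μ _)).comp h
  rw [hlimsupA]
  exact ge_of_tendsto' htend hmain
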